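/- arXiv:2304.06451 — 2 statements merged into one kernel-verified Lean document; each statement's English description precedes it below -/
import Mathlib

section
/- Let P : ℕ → ℝ^{n×n} be a sequence of symmetric positive definite matrices, A : ℕ → ℝ^{n×n}, C ∈ ℝ^{1×n}, and γ > 1. Suppose for every k the block matrix [[-P(k), A(k)ᵀP(k+1), Cᵀ, Cᵀ]; [P(k+1)A(k), -P(k+1), 0, 0]; [C, 0, -1, 0]; [C, 0, 0, -(γ²-1)]] (arranged consistently with inequality (37) in the paper) is negative definite. Then for the system x(k+1) = A(k)x(k), with e(k) = C x(k) + Δ(k) for any sequence Δ, the Lyapunov function V(k) = x(k)ᵀ P(k) x(k) satisfies V(k+1) − V(k) + e(k)² − γ² Δ(k)² < 0 whenever (x(k), Δ(k)) ≠ 0. -/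
open Matrix

/-- A symmetric real matrix is negative definite iff its negation is positive definite. -/
def NegDef {m : Type*} [Fintype m] (M : Matrix m m ℝ) : Prop := (-M).PosDef

/-- if for every `k` the block matrix
`[[-P(k), A(k)ᵀP(k+1), Cᵀ, Cᵀ]; [P(k+1)A(k), -P(k+1), 0, 0]; [C, 0, -1, 0]; [C, 0, 0, -(γ²-1)]]`
is negative definite, then along any trajectory of `x(k+1) = A(k) x(k)` with output
`e(k) = C x(k) + Δ(k)`, the Lyapunov function `V(k) = x(k)ᵀ P(k) x(k)` satisfies
`V(k+1) - V(k) + e(k)² - γ² Δ(k)² < 0` whenever `(x(k), Δ(k)) ≠ 0`. -/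
theorem stmt5 {n : ℕ} (P A : ℕ → Matrix (Fin n) (Fin n) ℝ) (C : Matrix (Fin 1) (Fin n) ℝ)
    (γ : ℝ) (hγ : 1 < γ) (hP : ∀ k, (P k).PosDef)
    (hLMI : ∀ k, NegDef (fromBlocks
        (fromBlocks (-(P k)) ((A k)ᵀ * P (k + 1)) (P (k + 1) * A k) (-(P (k + 1))))
        (fromBlocks Cᵀ Cᵀ 0 0)
        (fromBlocks C 0 C 0)
        (fromBlocks (-1) 0 0 ((-(γ ^ 2 - 1)) • (1 : Matrix (Fin 1) (Fin 1) ℝ)))))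
    (x : ℕ → Fin n → ℝ) (hx : ∀ k, x (k + 1) = (A k).mulVec (x k))
    (Δ : ℕ → ℝ) (e V : ℕ → ℝ)
    (he : ∀ k, e k = C.mulVec (x k) 0 + Δ k)
    (hV : ∀ k, V k = x k ⬝ᵥ (P k).mulVec (x k)) :
    ∀ k, (x k ≠ 0 ∨ Δ k ≠ 0) →
      V (k + 1) - V k + e k ^ 2 - γ ^ 2 * Δ k ^ 2 < 0 := by
  intro k hk
  have hM : (-(fromBlocks
        (fromBlocks (-(P k)) ((A k)ᵀ * P (k + 1)) (P (k + 1) * A k) (-(P (k + 1))))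
        (fromBlocks Cᵀ Cᵀ 0 0)
        (fromBlocks C 0 C 0)
        (fromBlocks (-1) 0 0 ((-(γ ^ 2 - 1)) • (1 : Matrix (Fin 1) (Fin 1) ℝ))))).PosDef :=
    hLMI k
  set a : Fin 1 → ℝ := C.mulVec (x k) with ha
  set b : Fin 1 → ℝ := fun _ => Δ k with hb
  set v : ((Fin n ⊕ Fin n) ⊕ (Fin 1 ⊕ Fin 1)) → ℝ :=
    Sum.elim (Sum.elim (x k) (x (k+1))) (Sum.elim a b) with hv
  have hv0 : v ≠ 0 := by
    intro h
    rcases hk with h1 | h1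
    · exact h1 (funext fun i => congrFun h (Sum.inl (Sum.inl i)))
    · exact h1 (congrFun h (Sum.inr (Sum.inr 0)))
  have hpos := hM.dotProduct_mulVec_pos hv0
  simp only [neg_mulVec, dotProduct_neg, star_trivial] at hpos
  have hlt : v ⬝ᵥ (fromBlocks
        (fromBlocks (-(P k)) ((A k)ᵀ * P (k + 1)) (P (k + 1) * A k) (-(P (k + 1))))
        (fromBlocks Cᵀ Cᵀ 0 0)
        (fromBlocks C 0 C 0)
        (fromBlocks (-1) 0 0 ((-(γ ^ 2 - 1)) • (1 : Matrix (Fin 1) (Fin 1) ℝ)))).mulVec v < 0 := by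
    linarith
  simp only [fromBlocks_mulVec, Sum.elim_comp_inl, Sum.elim_comp_inr,
    sumElim_dotProduct_sumElim, dotProduct_add, Matrix.add_mulVec, neg_mulVec,
    dotProduct_neg, ← mulVec_mulVec, dotProduct_mulVec, vecMul_transpose,
    Matrix.zero_mulVec, dotProduct_zero, add_zero, smul_mulVec, one_mulVec,
    dotProduct_smul, smul_eq_mul, zero_add, hv, Sum.elim_comp_inl, Sum.elim_comp_inr] at hlt
  rw [← hx k] at hlt
  have hVk : x k ᵥ* P k ⬝ᵥ x k = V k := by rw [hV, dotProduct_mulVec]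
  have hVk1 : x (k+1) ᵥ* P (k+1) ⬝ᵥ x (k+1) = V (k+1) := by rw [hV, dotProduct_mulVec]
  have t3 : x (k+1) ᵥ* P (k+1) ᵥ* A k ⬝ᵥ x k = V (k+1) := by
    rw [← dotProduct_mulVec, ← hx k]; exact hVk1
  have t4 : a ᵥ* C ⬝ᵥ x k = a ⬝ᵥ a := by rw [← dotProduct_mulVec, ← ha]
  have t5 : b ᵥ* C ⬝ᵥ x k = b ⬝ᵥ a := by rw [← dotProduct_mulVec, ← ha]
  rw [hVk, hVk1, t3, t4, t5] at hlt
  have hsc : ∀ u w : Fin 1 → ℝ, u ⬝ᵥ w = u 0 * w 0 := by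
    intro u w; simp [dotProduct, Fin.sum_univ_one]
  simp only [hsc] at hlt
  simp only [ha, hb, he k] at hlt ⊢
  nlinarith [hlt]
end

section
/- Let F₁, ..., F_N be fixed n×n real matrices and suppose σ : ℕ → ℝ^N satisfies σᵢ(k) ≥ 0 and Σᵢ σᵢ(k) = 1 for all k. Suppose there exist symmetric positive definite matrices Q₁,...,Q_N and matrices M₁,...,M_N, T₁,...,T_N such that for all i, j: [[-Mᵢ - Mᵢᵀ + Qᵢ, (FᵢMᵢ + G Tᵢ)ᵀ]; [FᵢMᵢ + G Tᵢ, -Q_j]] < 0. Then each Mᵢ is invertible, and the time-varying system x(k+1) = (F(σ(k)) + G K(k)) x(k) with F(σ) = Σᵢ σᵢ Fᵢ and K(k) = Σᵢ σᵢ(k) Tᵢ Mᵢ^{-1} is asymptotically stable, admitting the parameter-dependent Lyapunov function V(x, σ) = xᵀ P(σ) x with P(σ) = (Σᵢ σᵢ Mᵢ Qᵢ^{-1} Mᵢᵀ)^{-1}-type construction ensuring V decreases along trajectories. -/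
open Matrix Filter

section helpers

lemma herm_transpose {d : ℕ} {S : Matrix (Fin d) (Fin d) ℝ} (hH : S.IsHermitian) : Sᵀ = S := by
  ext i j; have := congrFun (congrFun hH i) j
  simpa [Matrix.conjTranspose_apply] using this

lemma dot_sum_right {d N : ℕ} (u : Fin d → ℝ) (f : Fin N → Fin d → ℝ) :
    u ⬝ᵥ (∑ i, f i) = ∑ i, u ⬝ᵥ f i := by
  simp only [dotProduct, Finset.sum_apply, Finset.mul_sum]
  exact Finset.sum_comm

lemma dot_sum_left {d N : ℕ} (u : Fin d → ℝ) (f : Fin N → Fin d → ℝ) :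
    (∑ i, f i) ⬝ᵥ u = ∑ i, f i ⬝ᵥ u := by
  simp only [dotProduct, Finset.sum_apply, Finset.sum_mul]
  exact Finset.sum_comm

lemma mulVec_sum' {d e N : ℕ} (R : Matrix (Fin e) (Fin d) ℝ) (f : Fin N → Fin d → ℝ) :
    R *ᵥ (∑ i, f i) = ∑ i, R *ᵥ f i := by
  rw [← Matrix.mulVecLin_apply, map_sum]; simp [Matrix.mulVecLin_apply]

lemma sum_mulVec' {d e N : ℕ} (Mt : Fin N → Matrix (Fin e) (Fin d) ℝ) (v : Fin d → ℝ) :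
    (∑ i, Mt i) *ᵥ v = ∑ i, Mt i *ᵥ v := by
  ext j
  simp only [Matrix.mulVec, dotProduct, Matrix.sum_apply, Finset.sum_apply,
    Finset.sum_mul]
  exact Finset.sum_comm

lemma quad_repr {d : ℕ} (S : Matrix (Fin d) (Fin d) ℝ) (hH : S.IsHermitian) (v : Fin d → ℝ) :
    ∃ w : Fin d → ℝ, w ⬝ᵥ w = v ⬝ᵥ v ∧ v ⬝ᵥ S *ᵥ v = ∑ i, hH.eigenvalues i * (w i)^2 := by
  set U : Matrix (Fin d) (Fin d) ℝ := (IsHermitian.eigenvectorUnitary hH : Matrix (Fin d) (Fin d) ℝ) with hU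
  have hsU : star U = Uᵀ := by
    rw [Matrix.star_eq_conjTranspose]; ext i j; simp [Matrix.conjTranspose_apply]
  have h1 : U * Uᵀ = 1 := by
    rw [← hsU]; exact (Matrix.mem_unitaryGroup_iff).mp (IsHermitian.eigenvectorUnitary hH).2
  refine ⟨Uᵀ *ᵥ v, ?_, ?_⟩
  · rw [Matrix.dotProduct_mulVec, vecMul_transpose, mulVec_mulVec, h1, one_mulVec]
  · have hspec := hH.spectral_theorem
    simp only [Unitary.conjStarAlgAut_apply, Unitary.coe_star] at hspec
    rw [hsU] at hspec
    conv_lhs => rw [hspec]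
    rw [← mulVec_mulVec, ← mulVec_mulVec, Matrix.dotProduct_mulVec, ← Matrix.mulVec_transpose]
    simp only [← hU, Matrix.mulVec_diagonal, dotProduct, sq]
    exact Finset.sum_congr rfl fun i _ => by simp [Function.comp]; ring

lemma posdef_bounds {d : ℕ} {S : Matrix (Fin d) (Fin d) ℝ} (hS : S.PosDef) :
    ∃ a b : ℝ, 0 < a ∧ 0 < b ∧
      ∀ v : Fin d → ℝ, a * (v ⬝ᵥ v) ≤ v ⬝ᵥ S *ᵥ v ∧ v ⬝ᵥ S *ᵥ v ≤ b * (v ⬝ᵥ v) := by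
  rcases Nat.eq_zero_or_pos d with hd | hd
  · subst hd
    exact ⟨1, 1, one_pos, one_pos, fun v => by
      simp [dotProduct, Matrix.mulVec]⟩
  · have hne : (Finset.univ : Finset (Fin d)).Nonempty :=
      @Finset.univ_nonempty (Fin d) _ (Fin.pos_iff_nonempty.mp hd)
    set lam := hS.1.eigenvalues
    obtain ⟨i₀, -, hi₀⟩ := Finset.exists_min_image Finset.univ lam hne
    obtain ⟨i₁, -, hi₁⟩ := Finset.exists_max_image Finset.univ lam hne
    refine ⟨lam i₀, lam i₁, hS.eigenvalues_pos i₀, hS.eigenvalues_pos i₁, fun v => ?_⟩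
    obtain ⟨w, hw, hq⟩ := quad_repr S hS.1 v
    have hww : w ⬝ᵥ w = ∑ i, (w i)^2 := by simp [dotProduct, sq]
    constructor
    · rw [hq, ← hw, hww, Finset.mul_sum]
      exact Finset.sum_le_sum fun i _ =>
        mul_le_mul_of_nonneg_right (hi₀ i (Finset.mem_univ i)) (sq_nonneg _)
    · rw [hq, ← hw, hww, Finset.mul_sum]
      exact Finset.sum_le_sum fun i _ =>
        mul_le_mul_of_nonneg_right (hi₁ i (Finset.mem_univ i)) (sq_nonneg _)

lemma jensen_quad {d N : ℕ} {R : Matrix (Fin d) (Fin d) ℝ} (hR : R.PosSemidef)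
    (c : Fin N → ℝ) (hc0 : ∀ i, 0 ≤ c i) (hc1 : ∑ i, c i = 1)
    (w : Fin N → Fin d → ℝ) :
    (∑ i, c i • w i) ⬝ᵥ R *ᵥ (∑ i, c i • w i) ≤ ∑ i, c i * (w i ⬝ᵥ R *ᵥ w i) := by
  set B : Fin N → Fin N → ℝ := fun i l => w i ⬝ᵥ R *ᵥ w l with hB
  have hRt : Rᵀ = R := herm_transpose hR.1
  have hsymm : ∀ i l, B i l = B l i := by
    intro i l
    simp only [hB]
    rw [Matrix.dotProduct_mulVec, ← Matrix.mulVec_transpose, hRt, dotProduct_comm]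
  have hnn : ∀ i l, 0 ≤ (w i - w l) ⬝ᵥ R *ᵥ (w i - w l) := fun i l => by
    have := hR.dotProduct_mulVec_nonneg (w i - w l); simpa using this
  have hkey : ∀ i l, B i i + B l l - 2 * B i l = (w i - w l) ⬝ᵥ R *ᵥ (w i - w l) := by
    intro i l
    rw [Matrix.mulVec_sub, dotProduct_sub, sub_dotProduct, sub_dotProduct]
    have := hsymm i l
    simp only [hB] at this ⊢
    linarith
  have hLHS : (∑ i, c i • w i) ⬝ᵥ R *ᵥ (∑ i, c i • w i) = ∑ i, ∑ l, (c i * c l) * B i l := by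
    have e1 : R *ᵥ (∑ l, c l • w l) = ∑ l, c l • (R *ᵥ w l) := by
      rw [mulVec_sum']
      exact Finset.sum_congr rfl fun l _ => Matrix.mulVec_smul ..
    rw [e1, dot_sum_left]
    refine Finset.sum_congr rfl fun i _ => ?_
    rw [dot_sum_right]
    refine Finset.sum_congr rfl fun l _ => ?_
    rw [smul_dotProduct, dotProduct_smul, smul_eq_mul, smul_eq_mul]
    ring
  have hRHS : ∑ i, c i * (w i ⬝ᵥ R *ᵥ w i) = ∑ i, ∑ l, (c i * c l) * B i i := by
    refine Finset.sum_congr rfl fun i _ => ?_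
    calc c i * B i i = (c i * B i i) * ∑ l, c l := by rw [hc1]; ring
      _ = ∑ l, (c i * B i i) * c l := Finset.mul_sum _ _ _
      _ = ∑ l, (c i * c l) * B i i := Finset.sum_congr rfl fun l _ => by ring
  have hswap : ∑ i, ∑ l, (c i * c l) * B l l = ∑ i, ∑ l, (c i * c l) * B i i := by
    rw [Finset.sum_comm]
    exact Finset.sum_congr rfl fun l _ => Finset.sum_congr rfl fun i _ => by ring
  have hpos : 0 ≤ ∑ i, ∑ l, (c i * c l) * (B i i + B l l - 2 * B i l) :=
    Finset.sum_nonneg fun i _ => Finset.sum_nonneg fun l _ => by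
      rw [hkey i l]; exact mul_nonneg (mul_nonneg (hc0 i) (hc0 l)) (hnn i l)
  have key2 : ∑ i, ∑ l, (c i * c l) * (B i i + B l l - 2 * B i l)
      = (∑ i, ∑ l, (c i * c l) * B i i) + (∑ i, ∑ l, (c i * c l) * B l l)
        - 2 * (∑ i, ∑ l, (c i * c l) * B i l) := by
    rw [Finset.mul_sum, ← Finset.sum_add_distrib, ← Finset.sum_sub_distrib]
    refine Finset.sum_congr rfl fun i _ => ?_
    rw [Finset.mul_sum, ← Finset.sum_add_distrib, ← Finset.sum_sub_distrib]
    exact Finset.sum_congr rfl fun l _ => by ring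
  rw [hLHS, hRHS]
  rw [hswap] at key2
  linarith

end helpers

/-- polytopic LMI stabilization. If the LMIs
`[[-Mᵢ - Mᵢᵀ + Qᵢ, (FᵢMᵢ + GTᵢ)ᵀ]; [FᵢMᵢ + GTᵢ, -Q_j]] < 0` hold for all `i, j`
with `Qᵢ` symmetric positive definite, then each `Mᵢ` is invertible and the
closed-loop time-varying system `x(k+1) = (F(σ(k)) + G K(k)) x(k)`, with
`F(σ) = ∑ᵢ σᵢ Fᵢ` and `K(k) = ∑ᵢ σᵢ(k) Tᵢ Mᵢ⁻¹`, is asymptotically stable,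
admitting a parameter-dependent quadratic Lyapunov function decreasing along
nonzero trajectories. -/
theorem stmt11 {n m N : ℕ}
    (F : Fin N → Matrix (Fin n) (Fin n) ℝ) (G : Matrix (Fin n) (Fin m) ℝ)
    (σ : ℕ → Fin N → ℝ) (hσ0 : ∀ k i, 0 ≤ σ k i) (hσ1 : ∀ k, ∑ i, σ k i = 1)
    (Q M : Fin N → Matrix (Fin n) (Fin n) ℝ) (T : Fin N → Matrix (Fin m) (Fin n) ℝ)
    (hQ : ∀ i, (Q i).PosDef)
    (hLMI : ∀ i j, NegDef (fromBlocks
        (-(M i) - (M i)ᵀ + Q i) ((F i * M i + G * T i)ᵀ)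
        (F i * M i + G * T i) (-(Q j))))
    (K : ℕ → Matrix (Fin m) (Fin n) ℝ)
    (hK : ∀ k, K k = ∑ i, σ k i • (T i * (M i)⁻¹)) :
    (∀ i, IsUnit (M i)) ∧
    (∀ x : ℕ → Fin n → ℝ,
      (∀ k, x (k + 1) = ((∑ i, σ k i • F i) + G * K k).mulVec (x k)) →
      Tendsto x atTop (nhds 0)) ∧
    (∃ P : ℕ → Matrix (Fin n) (Fin n) ℝ, (∀ k, (P k).PosDef) ∧
      ∀ x : ℕ → Fin n → ℝ,
        (∀ k, x (k + 1) = ((∑ i, σ k i • F i) + G * K k).mulVec (x k)) →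
        ∀ k, x k ≠ 0 →
          x (k + 1) ⬝ᵥ (P (k + 1)).mulVec (x (k + 1)) < x k ⬝ᵥ (P k).mulVec (x k)) := by
  -- the quadratic form of the LMI, evaluated at block vectors
  have hLMIquad : ∀ i j (a b : Fin n → ℝ), (a ≠ 0 ∨ b ≠ 0) →
      0 < a ⬝ᵥ ((M i + (M i)ᵀ - Q i) *ᵥ a) - a ⬝ᵥ ((F i * M i + G * T i)ᵀ *ᵥ b)
          - b ⬝ᵥ ((F i * M i + G * T i) *ᵥ a) + b ⬝ᵥ (Q j *ᵥ b) := by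
    intro i j a b hab
    have hz : (Sum.elim a b : Sum (Fin n) (Fin n) → ℝ) ≠ 0 := by
      intro h
      rcases hab with h' | h'
      · exact h' (funext fun t => congrFun h (Sum.inl t))
      · exact h' (funext fun t => congrFun h (Sum.inr t))
    have := Matrix.PosDef.dotProduct_mulVec_pos (hLMI i j) hz
    rw [Matrix.fromBlocks_neg, Matrix.fromBlocks_mulVec] at this
    rw [show (star (Sum.elim a b) : Sum (Fin n) (Fin n) → ℝ) = Sum.elim a b from rfl] at this
    rw [sumElim_dotProduct_sumElim] at this
    have e1 : -(-(M i) - (M i)ᵀ + Q i) = M i + (M i)ᵀ - Q i := by abel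
    rw [e1] at this
    simp only [Matrix.neg_mulVec, Matrix.add_mulVec, Matrix.sub_mulVec,
      dotProduct_add, dotProduct_sub, dotProduct_neg, neg_neg,
      Sum.elim_comp_inl, Sum.elim_comp_inr] at this ⊢
    linarith
  have hstar : ∀ v : Fin n → ℝ, star v = v := fun v => funext fun t => star_trivial _
  have hNpos : 0 < N := by
    rcases Nat.eq_zero_or_pos N with h | h
    · exact absurd (hσ1 0) (by subst h; simp)
    · exact h
  -- each M i is invertible
  have hMu : ∀ i, IsUnit (M i) := by
    intro i
    rw [← Matrix.mulVec_injective_iff_isUnit]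
    intro p q hpq
    by_contra hne'
    set a : Fin n → ℝ := p - q with hadef
    have hne : a ≠ 0 := fun h => hne' (by
      have := congrArg (fun z => z + q) h
      simpa [hadef, sub_add_cancel] using this)
    have ha : M i *ᵥ a = 0 := by
      rw [hadef, Matrix.mulVec_sub, hpq, sub_self]
    have h1 := hLMIquad i i a 0 (Or.inl hne)
    simp only [Matrix.mulVec_zero, dotProduct_zero, zero_dotProduct,
      sub_zero, add_zero] at h1
    have e1 : a ⬝ᵥ ((M i + (M i)ᵀ - Q i) *ᵥ a)
        = a ⬝ᵥ (M i *ᵥ a) + a ⬝ᵥ ((M i)ᵀ *ᵥ a) - a ⬝ᵥ (Q i *ᵥ a) := by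
      simp [Matrix.add_mulVec, Matrix.sub_mulVec, dotProduct_add, dotProduct_sub]
    have e2 : a ⬝ᵥ ((M i)ᵀ *ᵥ a) = 0 := by
      rw [Matrix.dotProduct_mulVec, Matrix.vecMul_transpose, ha, zero_dotProduct]
    have e3 : a ⬝ᵥ (M i *ᵥ a) = 0 := by rw [ha, dotProduct_zero]
    have hq := (hQ i).dotProduct_mulVec_pos hne
    rw [hstar a] at hq
    rw [e1, e2, e3] at h1
    linarith
  set A : Fin N → Matrix (Fin n) (Fin n) ℝ := fun i => F i + G * (T i * (M i)⁻¹) with hAdef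
  set P : Fin N → Matrix (Fin n) (Fin n) ℝ := fun i => (Q i)⁻¹ with hPdef
  have hP : ∀ i, (P i).PosDef := fun i => (hQ i).inv
  have hPt : ∀ i, (P i)ᵀ = P i := fun i => herm_transpose (hP i).1
  have hAM : ∀ i, A i * M i = F i * M i + G * T i := by
    intro i
    have hinv : (M i)⁻¹ * M i = 1 :=
      Matrix.nonsing_inv_mul _ ((Matrix.isUnit_iff_isUnit_det _).mp (hMu i))
    show (F i + G * (T i * (M i)⁻¹)) * M i = _
    rw [Matrix.add_mul, Matrix.mul_assoc, Matrix.mul_assoc, hinv, Matrix.mul_one]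
  have hQmul : ∀ j (v : Fin n → ℝ), Q j *ᵥ ((Q j)⁻¹ *ᵥ v) = v := by
    intro j v
    rw [Matrix.mulVec_mulVec,
      Matrix.mul_nonsing_inv _ ((Matrix.isUnit_iff_isUnit_det _).mp (hQ j).isUnit),
      Matrix.one_mulVec]
  have hQmul' : ∀ j (v : Fin n → ℝ), (Q j)⁻¹ *ᵥ (Q j *ᵥ v) = v := by
    intro j v
    rw [Matrix.mulVec_mulVec,
      Matrix.nonsing_inv_mul _ ((Matrix.isUnit_iff_isUnit_det _).mp (hQ j).isUnit),
      Matrix.one_mulVec]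
  have hQflip : ∀ j (v w : Fin n → ℝ), (Q j *ᵥ v) ⬝ᵥ ((Q j)⁻¹ *ᵥ w) = v ⬝ᵥ w := by
    intro j v w
    rw [Matrix.dotProduct_mulVec, ← Matrix.mulVec_transpose, hPt j, hQmul']
  -- key inequality
  have hkey : ∀ i j (u : Fin n → ℝ), u ≠ 0 →
      (A i *ᵥ u) ⬝ᵥ (P j *ᵥ (A i *ᵥ u)) < u ⬝ᵥ (P i *ᵥ u) := by
    intro i j u hu
    have hMdet := (Matrix.isUnit_iff_isUnit_det _).mp (hMu i)
    set y := (M i)⁻¹ *ᵥ u with hy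
    have huy : M i *ᵥ y = u := by
      rw [hy, Matrix.mulVec_mulVec, Matrix.mul_nonsing_inv _ hMdet, Matrix.one_mulVec]
    have hy0 : y ≠ 0 := fun h => hu (by rw [← huy, h, Matrix.mulVec_zero])
    set C := F i * M i + G * T i with hC
    set b := (Q j)⁻¹ *ᵥ (C *ᵥ y) with hb
    set s := (C *ᵥ y) ⬝ᵥ ((Q j)⁻¹ *ᵥ (C *ᵥ y)) with hs
    have h1 := hLMIquad i j y b (Or.inl hy0)
    have t1 : y ⬝ᵥ (Cᵀ *ᵥ b) = s := by
      rw [Matrix.dotProduct_mulVec, Matrix.vecMul_transpose, hb, hs]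
    have t2 : b ⬝ᵥ (C *ᵥ y) = s := by rw [hb, hs, dotProduct_comm]
    have t3 : b ⬝ᵥ (Q j *ᵥ b) = s := by
      conv_lhs => rw [hb, hQmul j]
      rw [← hb, t2]
    rw [t1, t2, t3] at h1
    have e2 : y ⬝ᵥ ((M i)ᵀ *ᵥ y) = y ⬝ᵥ (M i *ᵥ y) := by
      rw [Matrix.dotProduct_mulVec, Matrix.vecMul_transpose, dotProduct_comm]
    have e1 : y ⬝ᵥ ((M i + (M i)ᵀ - Q i) *ᵥ y)
        = 2*(y ⬝ᵥ (M i *ᵥ y)) - y ⬝ᵥ (Q i *ᵥ y) := by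
      simp only [Matrix.add_mulVec, Matrix.sub_mulVec, dotProduct_add,
        dotProduct_sub, e2]
      ring
    rw [e1] at h1
    -- PSD slack term
    have hslack := ((hQ i).inv.posSemidef).dotProduct_mulVec_nonneg (M i *ᵥ y - Q i *ᵥ y)
    rw [hstar] at hslack
    have hexp : (M i *ᵥ y - Q i *ᵥ y) ⬝ᵥ ((Q i)⁻¹ *ᵥ (M i *ᵥ y - Q i *ᵥ y))
        = u ⬝ᵥ ((Q i)⁻¹ *ᵥ u) - 2*(y ⬝ᵥ u) + y ⬝ᵥ (Q i *ᵥ y) := by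
      rw [Matrix.mulVec_sub, dotProduct_sub, sub_dotProduct,
        sub_dotProduct, hQmul' i, hQflip i, huy]
      have c2 : (Q i *ᵥ y) ⬝ᵥ y = y ⬝ᵥ (Q i *ᵥ y) := dotProduct_comm _ _
      rw [c2, dotProduct_comm u y]
      ring
    rw [hexp] at hslack
    have hyu : y ⬝ᵥ (M i *ᵥ y) = y ⬝ᵥ u := by rw [huy]
    have hAu : A i *ᵥ u = C *ᵥ y := by
      rw [← huy, Matrix.mulVec_mulVec, hAM i, ← hC]
    rw [hAu]
    show s < u ⬝ᵥ ((Q i)⁻¹ *ᵥ u)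
    linarith
  -- closed loop matrix is the convex combination of the A i
  have hclosed : ∀ k, (∑ i, σ k i • F i) + G * K k = ∑ i, σ k i • A i := by
    intro k
    rw [hK k, Matrix.mul_sum, ← Finset.sum_add_distrib]
    refine Finset.sum_congr rfl fun i _ => ?_
    rw [Matrix.mul_smul, ← smul_add]
  have hdvv : ∀ v : Fin n → ℝ, 0 ≤ v ⬝ᵥ v :=
    fun v => Finset.sum_nonneg fun t _ => mul_self_nonneg _
  -- quadratic identity for the S matrices
  have hquadS : ∀ i j (v : Fin n → ℝ),
      v ⬝ᵥ ((P i - (A i)ᵀ * P j * A i) *ᵥ v)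
        = v ⬝ᵥ (P i *ᵥ v) - (A i *ᵥ v) ⬝ᵥ (P j *ᵥ (A i *ᵥ v)) := by
    intro i j v
    rw [Matrix.sub_mulVec, dotProduct_sub]
    congr 1
    rw [← Matrix.mulVec_mulVec, ← Matrix.mulVec_mulVec, Matrix.dotProduct_mulVec,
      Matrix.vecMul_transpose]
  have hSpos : ∀ i j, (P i - (A i)ᵀ * P j * A i).PosDef := by
    intro i j
    refine Matrix.PosDef.of_dotProduct_mulVec_pos ?_ ?_
    · have htr : (P i - (A i)ᵀ * P j * A i)ᵀ = P i - (A i)ᵀ * P j * A i := by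
        rw [Matrix.transpose_sub, Matrix.transpose_mul, Matrix.transpose_mul,
          Matrix.transpose_transpose, hPt i, hPt j, Matrix.mul_assoc]
      show _ = _
      ext a c
      rw [Matrix.conjTranspose_apply, star_trivial]
      exact congrFun (congrFun htr a) c
    · intro v hv
      rw [hstar, hquadS i j v]
      have := hkey i j v hv
      linarith
  -- uniform bounds
  choose ef bf hef hbf hSbnd using fun p : Fin N × Fin N => posdef_bounds (hSpos p.1 p.2)
  choose af pf haf hpf hPbnd using fun i : Fin N => posdef_bounds (hP i)
  have hneN : (Finset.univ : Finset (Fin N)).Nonempty :=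
    @Finset.univ_nonempty (Fin N) _ (Fin.pos_iff_nonempty.mp hNpos)
  have hnePr : (Finset.univ : Finset (Fin N × Fin N)).Nonempty := by
    obtain ⟨i, -⟩ := hneN
    exact ⟨(i, i), Finset.mem_univ _⟩
  obtain ⟨p₀, -, hp₀⟩ := Finset.exists_min_image Finset.univ ef hnePr
  obtain ⟨i₀, -, hi₀⟩ := Finset.exists_min_image Finset.univ af hneN
  obtain ⟨i₁, -, hi₁⟩ := Finset.exists_max_image Finset.univ pf hneN
  set ε := ef p₀ with hεdef
  set α := af i₀ with hαdef
  set β := pf i₁ with hβdef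
  have hε : 0 < ε := hef p₀
  have hα : 0 < α := haf i₀
  have hβ : 0 < β := hpf i₁
  -- quadratic form of the convex combination
  have hquadsum : ∀ k (v : Fin n → ℝ),
      v ⬝ᵥ ((∑ i, σ k i • P i) *ᵥ v) = ∑ i, σ k i * (v ⬝ᵥ (P i *ᵥ v)) := by
    intro k v
    rw [sum_mulVec', dot_sum_right]
    refine Finset.sum_congr rfl fun i _ => ?_
    rw [Matrix.smul_mulVec, dotProduct_smul, smul_eq_mul]
  have hlow : ∀ k (v : Fin n → ℝ), α * (v ⬝ᵥ v) ≤ v ⬝ᵥ ((∑ i, σ k i • P i) *ᵥ v) := by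
    intro k v
    rw [hquadsum]
    calc α * (v ⬝ᵥ v) = (∑ i, σ k i) * (α * (v ⬝ᵥ v)) := by rw [hσ1 k, one_mul]
      _ = ∑ i, σ k i * (α * (v ⬝ᵥ v)) := Finset.sum_mul _ _ _
      _ ≤ ∑ i, σ k i * (v ⬝ᵥ (P i *ᵥ v)) := by
          refine Finset.sum_le_sum fun i _ => mul_le_mul_of_nonneg_left ?_ (hσ0 k i)
          exact le_trans (mul_le_mul_of_nonneg_right (hi₀ i (Finset.mem_univ i)) (hdvv v))
            (hPbnd i v).1
  have hhigh : ∀ k (v : Fin n → ℝ), v ⬝ᵥ ((∑ i, σ k i • P i) *ᵥ v) ≤ β * (v ⬝ᵥ v) := by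
    intro k v
    rw [hquadsum]
    calc ∑ i, σ k i * (v ⬝ᵥ (P i *ᵥ v)) ≤ ∑ i, σ k i * (β * (v ⬝ᵥ v)) := by
          refine Finset.sum_le_sum fun i _ => mul_le_mul_of_nonneg_left ?_ (hσ0 k i)
          exact le_trans (hPbnd i v).2
            (mul_le_mul_of_nonneg_right (hi₁ i (Finset.mem_univ i)) (hdvv v))
      _ = (∑ i, σ k i) * (β * (v ⬝ᵥ v)) := (Finset.sum_mul _ _ _).symm
      _ = β * (v ⬝ᵥ v) := by rw [hσ1 k, one_mul]
  -- uniform strict decrease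
  have hdec : ∀ k (v : Fin n → ℝ),
      ((∑ i, σ k i • A i) *ᵥ v) ⬝ᵥ ((∑ i, σ (k+1) i • P i) *ᵥ ((∑ i, σ k i • A i) *ᵥ v))
        ≤ v ⬝ᵥ ((∑ i, σ k i • P i) *ᵥ v) - ε * (v ⬝ᵥ v) := by
    intro k v
    set w := (∑ i, σ k i • A i) *ᵥ v with hw
    have hwsum : w = ∑ i, σ k i • (A i *ᵥ v) := by
      rw [hw, sum_mulVec']
      exact Finset.sum_congr rfl fun i _ => Matrix.smul_mulVec ..
    rw [hquadsum (k+1) w]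
    have hj : ∀ j, w ⬝ᵥ (P j *ᵥ w) ≤ ∑ i, σ k i * ((A i *ᵥ v) ⬝ᵥ (P j *ᵥ (A i *ᵥ v))) := by
      intro j
      rw [hwsum]
      exact jensen_quad (hP j).posSemidef (σ k) (hσ0 k) (hσ1 k) (fun i => A i *ᵥ v)
    have hij : ∀ i j, (A i *ᵥ v) ⬝ᵥ (P j *ᵥ (A i *ᵥ v)) ≤ v ⬝ᵥ (P i *ᵥ v) - ε * (v ⬝ᵥ v) := by
      intro i j
      have h1 := (hSbnd (i, j) v).1
      rw [hquadS i j v] at h1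
      have h4 : ε * (v ⬝ᵥ v) ≤ ef (i, j) * (v ⬝ᵥ v) :=
        mul_le_mul_of_nonneg_right (hp₀ (i, j) (Finset.mem_univ _)) (hdvv v)
      linarith
    calc ∑ j, σ (k+1) j * (w ⬝ᵥ (P j *ᵥ w))
        ≤ ∑ j, σ (k+1) j * (∑ i, σ k i * (v ⬝ᵥ (P i *ᵥ v) - ε * (v ⬝ᵥ v))) := by
          refine Finset.sum_le_sum fun j _ => mul_le_mul_of_nonneg_left ?_ (hσ0 (k+1) j)
          exact le_trans (hj j)
            (Finset.sum_le_sum fun i _ => mul_le_mul_of_nonneg_left (hij i j) (hσ0 k i))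
      _ = ∑ i, σ k i * (v ⬝ᵥ (P i *ᵥ v) - ε * (v ⬝ᵥ v)) := by
          rw [← Finset.sum_mul, hσ1 (k+1), one_mul]
      _ = v ⬝ᵥ ((∑ i, σ k i • P i) *ᵥ v) - ε * (v ⬝ᵥ v) := by
          have e : ∀ i ∈ Finset.univ, σ k i * (v ⬝ᵥ (P i *ᵥ v) - ε * (v ⬝ᵥ v))
              = σ k i * (v ⬝ᵥ (P i *ᵥ v)) - σ k i * (ε * (v ⬝ᵥ v)) := fun i _ => by ring
          rw [Finset.sum_congr rfl e, Finset.sum_sub_distrib, hquadsum k v]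
          have e2 : ∑ i, σ k i * (ε * (v ⬝ᵥ v)) = ε * (v ⬝ᵥ v) := by
            rw [← Finset.sum_mul, hσ1 k, one_mul]
          rw [e2]
  -- positive σ component exists
  have hσpos : ∀ k, ∃ i, 0 < σ k i := by
    intro k
    by_contra h
    push_neg at h
    have : ∑ i, σ k i ≤ 0 := Finset.sum_nonpos fun i _ => h i
    rw [hσ1 k] at this
    linarith
  have hPmatPD : ∀ k, (∑ i, σ k i • P i).PosDef := by
    intro k
    refine Matrix.PosDef.of_dotProduct_mulVec_pos ?_ ?_
    · have htr : (∑ i, σ k i • P i)ᵀ = ∑ i, σ k i • P i := by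
        rw [Matrix.transpose_sum]
        exact Finset.sum_congr rfl fun i _ => by rw [Matrix.transpose_smul, hPt i]
      show _ = _
      ext a c
      rw [Matrix.conjTranspose_apply, star_trivial]
      exact congrFun (congrFun htr a) c
    · intro v hv
      rw [hstar, hquadsum k v]
      obtain ⟨i, hi⟩ := hσpos k
      refine Finset.sum_pos' (fun l _ => mul_nonneg (hσ0 k l) ?_) ⟨i, Finset.mem_univ i, ?_⟩
      · have := (hP l).posSemidef.dotProduct_mulVec_nonneg v
        rwa [hstar] at this
      · refine mul_pos hi ?_
        have := (hP i).dotProduct_mulVec_pos hv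
        rwa [hstar] at this
  have hvvpos : ∀ v : Fin n → ℝ, v ≠ 0 → 0 < v ⬝ᵥ v := by
    intro v hv
    rcases lt_or_eq_of_le (hdvv v) with h | h
    · exact h
    · exact absurd (dotProduct_self_eq_zero.mp h.symm) hv
  refine ⟨hMu, ?_, ?_⟩
  · -- asymptotic stability
    intro x hx
    set d : ℕ → ℝ := fun k => x k ⬝ᵥ x k with hd
    set V : ℕ → ℝ := fun k => x k ⬝ᵥ ((∑ i, σ k i • P i) *ᵥ x k) with hV
    have hstep : ∀ k, V (k+1) ≤ V k - ε * d k := by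
      intro k
      have h := hdec k (x k)
      rw [← hclosed k, ← hx k] at h
      exact h
    have hVnn : ∀ k, 0 ≤ V k := fun k =>
      le_trans (mul_nonneg hα.le (hdvv (x k))) (hlow k (x k))
    have hαd : ∀ k, α * d k ≤ V k := fun k => hlow k (x k)
    have hVd : ∀ k, V k ≤ β * d k := fun k => hhigh k (x k)
    set ρ := max (1 - ε / β) 0 with hρ
    have hρ0 : 0 ≤ ρ := le_max_right _ _
    have hρ1 : ρ < 1 := max_lt (by nlinarith [div_pos hε hβ]) one_pos
    have hcontr : ∀ k, V (k+1) ≤ ρ * V k := by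
      intro k
      have h1 : (ε/β) * V k ≤ ε * d k := by
        have h2 := mul_le_mul_of_nonneg_left (hVd k) (div_pos hε hβ).le
        calc (ε/β) * V k ≤ (ε/β) * (β * d k) := h2
          _ = ε * d k := by field_simp
      have h3 : V (k+1) ≤ (1 - ε/β) * V k := by
        have := hstep k
        nlinarith
      exact le_trans h3 (mul_le_mul_of_nonneg_right (le_max_left _ _) (hVnn k))
    have hgeo : ∀ k, V k ≤ ρ^k * V 0 := by
      intro k
      induction k with
      | zero => simp
      | succ k ih => calc V (k+1) ≤ ρ * V k := hcontr k
          _ ≤ ρ * (ρ^k * V 0) := mul_le_mul_of_nonneg_left ih hρ0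
          _ = ρ^(k+1) * V 0 := by ring
    have hVto : Tendsto V atTop (nhds 0) := by
      refine squeeze_zero hVnn hgeo ?_
      have := (tendsto_pow_atTop_nhds_zero_of_lt_one hρ0 hρ1).mul_const (V 0)
      simpa using this
    have hdto : Tendsto d atTop (nhds 0) := by
      refine squeeze_zero (g := fun k => V k / α) (fun k => hdvv (x k)) (fun k => ?_) ?_
      · show d k ≤ V k / α
        rw [le_div_iff₀ hα]
        linarith [hαd k]
      · have := hVto.div_const α
        simpa using this
    rw [tendsto_pi_nhds]
    intro t
    have hcoord : ∀ k, ‖x k t‖ ≤ Real.sqrt (d k) := by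
      intro k
      rw [Real.norm_eq_abs, ← Real.sqrt_sq_eq_abs]
      apply Real.sqrt_le_sqrt
      have h5 := Finset.single_le_sum (f := fun t' => x k t' * x k t')
        (fun t' _ => mul_self_nonneg _) (Finset.mem_univ t)
      calc (x k t)^2 = x k t * x k t := sq _
        _ ≤ d k := h5
    have hsq : Tendsto (fun k => Real.sqrt (d k)) atTop (nhds 0) := by
      have := hdto.sqrt
      simpa using this
    have := squeeze_zero_norm hcoord hsq
    simpa using this
  · -- Lyapunov function
    refine ⟨fun k => ∑ i, σ k i • P i, hPmatPD, fun x hx k hk => ?_⟩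
    have h := hdec k (x k)
    rw [← hclosed k, ← hx k] at h
    have := hvvpos (x k) hk
    have h6 : 0 < ε * (x k ⬝ᵥ x k) := mul_pos hε this
    calc x (k+1) ⬝ᵥ ((∑ i, σ (k+1) i • P i) *ᵥ x (k+1))
        ≤ x k ⬝ᵥ ((∑ i, σ k i • P i) *ᵥ x k) - ε * (x k ⬝ᵥ x k) := h
      _ < x k ⬝ᵥ ((∑ i, σ k i • P i) *ᵥ x k) := by linarith
end
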